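/- Under the hypotheses of the basic identity (f, A as defined, D = d² − R ≠ 0, R ≠ 0), if u is a root of f in an extension of K, then 4D²·A(u)²·R = u² − 4D. -/

import Mathlib

open Finset

/-- The coefficient `c_{2k+1}` of the paper. -/
def cOdd (p k : ℕ) : ℚ :=
  (-1) ^ ((p - 1) / 2 - k) * ((p : ℚ) / (((p + 1) / 2 + k : ℕ) : ℚ)) *
    (Nat.choose ((p + 1) / 2 + k) (2 * k + 1) : ℚ)

/-- The coefficient `a_{2k}` of the paper. -/
def aEven (p k : ℕ) : ℚ :=
  (-1) ^ k * (((p : ℚ) - 1) / (((p - 1) / 2 + k : ℕ) : ℚ)) *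
    (Nat.choose ((p - 1) / 2 + k) (2 * k) : ℚ)

/-- Integer coefficients of Dickson polynomials of the first kind. -/
def dcoef (n j : ℕ) : ℕ :=
  if 2 * j ≤ n then
    Nat.choose (n - j) j + (if j = 0 then 0 else Nat.choose (n - j - 1) (j - 1))
  else 0

lemma dcoef_zero (n : ℕ) : dcoef n 0 = 1 := by simp [dcoef]

lemma dcoef_eq_zero {n j : ℕ} (h : ¬ 2 * j ≤ n) : dcoef n j = 0 := by simp [dcoef, h]

lemma dcoef_pascal {n j : ℕ} (h1 : 1 ≤ j) (h2 : 2 * j ≤ n + 3) :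
    dcoef (n + 3) j = dcoef (n + 2) j + dcoef (n + 1) (j - 1) := by
  obtain ⟨i, rfl⟩ : ∃ i, j = i + 1 := ⟨j - 1, by omega⟩
  by_cases hc : 2 * (i + 1) ≤ n + 2
  · rcases Nat.eq_zero_or_pos i with rfl | hi
    · simp only [dcoef, if_pos (by omega : 2*(0+1) ≤ n+3), if_pos (by omega : 2*(0+1) ≤ n+2),
        if_pos (by omega : 2*(0+1-1) ≤ n+1), if_neg (by omega : ¬ (0+1) = 0),
        show (0+1-1 : ℕ) = 0 from rfl, if_pos rfl]
      simp only [show n+3-(0+1) = n+2 by omega, show n+2-(0+1) = n+1 by omega,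
        show n+3-(0+1)-1 = n+1 by omega, show n+2-(0+1)-1 = n by omega,
        show n+1-0 = n+1 by omega, show (0+1-1 : ℕ) = 0 from rfl]
      simp [Nat.choose_one_right]
    · obtain ⟨b, rfl⟩ : ∃ b, i = b + 1 := ⟨i - 1, by omega⟩
      obtain ⟨a, rfl⟩ : ∃ a, n = 2 * (b + 1) + a := ⟨n - 2*(b+1), by omega⟩
      simp only [dcoef, if_pos (by omega : 2*(b+1+1) ≤ 2*(b+1)+a+3),
        if_pos (by omega : 2*(b+1+1) ≤ 2*(b+1)+a+2),
        if_pos (by omega : 2*(b+1+1-1) ≤ 2*(b+1)+a+1),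
        if_neg (by omega : ¬ (b+1+1) = 0)]
      rw [show b+1+1-1 = b+1 by omega, if_neg (by omega : ¬ (b+1) = 0)]
      simp only [show 2*(b+1)+a+3-(b+1+1)-1 = (b+a+1)+1 by omega,
        show 2*(b+1)+a+3-(b+1+1) = (b+a+2)+1 by omega,
        show 2*(b+1)+a+2-(b+1+1)-1 = b+a+1 by omega,
        show 2*(b+1)+a+2-(b+1+1) = (b+a+1)+1 by omega,
        show 2*(b+1)+a+1-(b+1)-1 = b+a+1 by omega,
        show 2*(b+1)+a+1-(b+1) = (b+a+1)+1 by omega,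
        show b+1+1-1-1 = b by omega, show b+1+1-1 = b+1 by omega,
        show b+1-1 = b by omega]
      have hp1 : (b+a+2+1).choose (b+1+1) = (b+a+2).choose (b+1) + (b+a+2).choose (b+1+1) :=
        Nat.choose_succ_succ (b+a+2) (b+1)
      have hp2 : (b+a+1+1).choose (b+1) = (b+a+1).choose b + (b+a+1).choose (b+1) :=
        Nat.choose_succ_succ (b+a+1) b
      simp only [Nat.succ_eq_add_one, Nat.add_sub_cancel, show b+a+2+1 = b+a+3 from by omega,
        show b+a+1+1 = b+a+2 from by omega, show b+a+2-1 = b+a+1 from by omega, show b+a+3-1 = b+a+2 from by omega] at hp1 hp2 ⊢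
      omega
  · obtain ⟨b, rfl⟩ : ∃ b, n = 2 * b + 1 := ⟨(n-1)/2, by omega⟩
    have hib : i = b + 1 := by omega
    subst hib
    simp only [dcoef, if_pos (by omega : 2*(b+1+1) ≤ 2*b+1+3),
      if_neg (by omega : ¬ 2*(b+1+1) ≤ 2*b+1+2),
      if_pos (by omega : 2*(b+1+1-1) ≤ 2*b+1+1),
      if_neg (by omega : ¬ (b+1+1) = 0)]
    rw [show b+1+1-1 = b+1 by omega, if_neg (by omega : ¬ (b+1) = 0)]
    simp only [show 2*b+1+3-(b+1+1)-1 = b+1 by omega,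
      show 2*b+1+3-(b+1+1) = b+2 by omega,
      show 2*b+1+1-(b+1)-1 = b by omega,
      show 2*b+1+1-(b+1) = b+1 by omega,
      show b+1+1-1-1 = b by omega, show b+1-1 = b by omega]
    simp [show b+2 = b+1+1 from rfl, Nat.choose_self, Nat.choose_succ_self_right]

section DicksonSum

variable {L : Type*} [CommRing L]

/-- One term of the Dickson sum. -/
def dterm (t s : L) (n j : ℕ) : L :=
  (-1) ^ j * (dcoef n j : L) * ((t * s) ^ j * (t + s) ^ (n - 2 * j))

lemma dterm_eq_zero (t s : L) {n j : ℕ} (h : ¬ 2 * j ≤ n) : dterm t s n j = 0 := by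
  simp [dterm, dcoef_eq_zero h]

lemma sum_dterm_pad (t s : L) (n M : ℕ) (hM : n / 2 + 1 ≤ M) :
    ∑ j ∈ Finset.range M, dterm t s n j = ∑ j ∈ Finset.range (n / 2 + 1), dterm t s n j := by
  refine (Finset.sum_subset (Finset.range_subset_range.mpr hM) ?_).symm
  intro j hj hnj
  simp only [Finset.mem_range] at hj hnj
  exact dterm_eq_zero t s (by omega)

/-- Auxiliary shifted term. -/
def gaux (t s : L) (n j : ℕ) : L :=
  (-1) ^ j * (if j = 0 then 0 else (dcoef (n + 1) (j - 1) : L)) *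
    ((t * s) ^ j * (t + s) ^ (n + 3 - 2 * j))

lemma gaux_succ (t s : L) (n j : ℕ) :
    (-(t * s)) * dterm t s (n + 1) j = gaux t s n (j + 1) := by
  by_cases h : 2 * j ≤ n + 1
  · simp only [gaux, dterm, if_neg (Nat.succ_ne_zero j), Nat.add_sub_cancel,
      show n + 3 - 2 * (j + 1) = n + 1 - 2 * j from by omega]
    ring
  · simp [gaux, dterm, dcoef_eq_zero h, Nat.add_sub_cancel]

lemma dterm_split (t s : L) (n j : ℕ) (hj : 2 * j ≤ n + 3) :
    dterm t s (n + 3) j = (t + s) * dterm t s (n + 2) j + gaux t s n j := by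
  rcases Nat.eq_zero_or_pos j with rfl | hj1
  · simp [dterm, gaux, dcoef_zero]
    rw [show n + 3 = (n + 2) + 1 from by omega, pow_succ]
    ring
  · by_cases hc : 2 * j ≤ n + 2
    · simp only [dterm, gaux, if_neg (by omega : ¬ j = 0), dcoef_pascal hj1 hj, Nat.cast_add,
        show n + 3 - 2 * j = (n + 2 - 2 * j) + 1 from by omega]
      ring
    · simp only [dterm, gaux, if_neg (by omega : ¬ j = 0), dcoef_pascal hj1 hj, Nat.cast_add,
        dcoef_eq_zero hc, Nat.cast_zero]
      ring

lemma dickson_sum (t s : L) : ∀ n : ℕ, 1 ≤ n →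
    ∑ j ∈ Finset.range (n / 2 + 1), dterm t s n j = t ^ n + s ^ n := by
  suffices H : ∀ n : ℕ,
      (∑ j ∈ Finset.range ((n + 1) / 2 + 1), dterm t s (n + 1) j = t ^ (n + 1) + s ^ (n + 1)) ∧
      (∑ j ∈ Finset.range ((n + 2) / 2 + 1), dterm t s (n + 2) j = t ^ (n + 2) + s ^ (n + 2)) by
    intro n hn
    obtain ⟨k, rfl⟩ : ∃ k, n = k + 1 := ⟨n - 1, by omega⟩
    exact (H k).1
  intro n
  induction n with
  | zero =>
    constructor
    · simp [dterm, dcoef]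
    · rw [show (0 + 2) / 2 + 1 = 2 from rfl, Finset.sum_range_succ, Finset.sum_range_one]
      simp only [dterm]
      norm_num [dcoef]
      ring
  | succ n ih =>
    refine ⟨ih.2, ?_⟩
    have h2 := ih.2
    have h1 := ih.1
    set M := (n + 3) / 2 + 1 with hMdef
    rw [← sum_dterm_pad t s (n + 2) M (by omega)] at h2
    rw [← sum_dterm_pad t s (n + 1) M (by omega)] at h1
    have hg0 : gaux t s n 0 = 0 := by simp [gaux]
    have hgM : gaux t s n M = 0 := by
      have hM0 : ¬ M = 0 := by omega
      have h0 : ¬ 2 * ((n + 3) / 2) ≤ n + 1 := by omega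
      simp [gaux, if_neg hM0, hMdef, dcoef_eq_zero h0]
    have hshift : ∑ j ∈ Finset.range M, gaux t s n j
        = ∑ j ∈ Finset.range M, (-(t * s)) * dterm t s (n + 1) j := by
      have e1 : ∑ j ∈ Finset.range (M + 1), gaux t s n j
          = ∑ j ∈ Finset.range M, gaux t s n j + gaux t s n M := Finset.sum_range_succ _ _
      have e2 : ∑ j ∈ Finset.range (M + 1), gaux t s n j
          = ∑ j ∈ Finset.range M, gaux t s n (j + 1) + gaux t s n 0 := Finset.sum_range_succ' _ _
      have e3 : ∑ j ∈ Finset.range M, gaux t s n (j + 1)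
          = ∑ j ∈ Finset.range M, (-(t * s)) * dterm t s (n + 1) j :=
        Finset.sum_congr rfl fun j _ => (gaux_succ t s n j).symm
      rw [e1, hgM] at e2
      rw [hg0, e3] at e2
      simpa using e2
    have key : ∑ j ∈ Finset.range M, dterm t s (n + 3) j
        = (t + s) * (∑ j ∈ Finset.range M, dterm t s (n + 2) j)
          - t * s * (∑ j ∈ Finset.range M, dterm t s (n + 1) j) := by
      have c3 : ∀ j ∈ Finset.range M, dterm t s (n + 3) j
          = (t + s) * dterm t s (n + 2) j + gaux t s n j := by
        intro j hj
        simp only [Finset.mem_range] at hj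
        exact dterm_split t s n j (by omega)
      rw [Finset.sum_congr rfl c3, Finset.sum_add_distrib, ← Finset.mul_sum, hshift,
        ← Finset.mul_sum]
      ring
    rw [show n + 1 + 2 = n + 3 from by omega, key, h2, h1]
    ring

end DicksonSum

lemma dickson_sum_odd {L : Type*} [CommRing L] (t s : L) (m : ℕ) :
    ∑ k ∈ Finset.range (m + 1),
      (-1 : L) ^ (m - k) * (dcoef (2 * m + 1) (m - k) : L) *
        ((t * s) ^ (m - k) * (t + s) ^ (2 * k + 1))
      = t ^ (2 * m + 1) + s ^ (2 * m + 1) := by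
  have h := dickson_sum t s (2 * m + 1) (by omega)
  rw [show (2 * m + 1) / 2 = m from by omega] at h
  rw [← h, ← Finset.sum_range_reflect]
  refine Finset.sum_congr rfl fun k hk => ?_
  simp only [Finset.mem_range] at hk
  simp only [dterm, show m + 1 - 1 - k = m - k from by omega]
  simp only [show m - (m - k) = k from by omega,
    show 2 * (m - k) + 1 = 2 * m + 1 - 2 * k from by omega]

lemma dickson_sum_even {L : Type*} [CommRing L] (t s : L) (m : ℕ) (hm : 1 ≤ m) :
    ∑ k ∈ Finset.range (m + 1),
      (-1 : L) ^ (m - k) * (dcoef (2 * m) (m - k) : L) *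
        ((t * s) ^ (m - k) * (t + s) ^ (2 * k))
      = t ^ (2 * m) + s ^ (2 * m) := by
  have h := dickson_sum t s (2 * m) (by omega)
  rw [show (2 * m) / 2 = m from by omega] at h
  rw [← h, ← Finset.sum_range_reflect]
  refine Finset.sum_congr rfl fun k hk => ?_
  simp only [Finset.mem_range] at hk
  simp only [dterm, show m + 1 - 1 - k = m - k from by omega]
  simp only [show m - (m - k) = k from by omega,
    show 2 * (m - k) = 2 * m - 2 * k from by omega]

lemma cOdd_eq (m k : ℕ) (hk : k ≤ m) :
    cOdd (2 * m + 1) k = (-1) ^ (m - k) * (dcoef (2 * m + 1) (m - k) : ℚ) := by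
  have hd : dcoef (2 * m + 1) (m - k)
      = Nat.choose (m + k + 1) (m - k) + Nat.choose (m + k) (2 * k + 1) := by
    rcases Nat.eq_or_lt_of_le hk with rfl | h
    · rw [Nat.sub_self, dcoef_zero, Nat.choose_zero_right,
        Nat.choose_eq_zero_of_lt (by omega)]
    · simp only [dcoef, if_pos (by omega : 2 * (m - k) ≤ 2 * m + 1),
        if_neg (by omega : ¬ m - k = 0),
        show 2 * m + 1 - (m - k) = m + k + 1 from by omega,
        show 2 * m + 1 - (m - k) - 1 = m + k from by omega]
      congr 1
      rw [← Nat.choose_symm (by omega : 2 * k + 1 ≤ m + k)]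
      congr 1
      omega
  have hsymm : Nat.choose (m + k + 1) (m - k) = Nat.choose (m + k + 1) (2 * k + 1) := by
    rw [← Nat.choose_symm (by omega : 2 * k + 1 ≤ m + k + 1)]
    congr 1
    omega
  have hmul := Nat.choose_mul_succ_eq (m + k) (2 * k + 1)
  rw [show m + k + 1 - (2 * k + 1) = m - k from by omega] at hmul
  have hmulQ : (Nat.choose (m + k) (2 * k + 1) : ℚ) * (m + k + 1)
      = (Nat.choose (m + k + 1) (2 * k + 1) : ℚ) * ((m : ℚ) - k) := by
    have := congrArg (fun x : ℕ => (x : ℚ)) hmul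
    push_cast at this
    rw [Nat.cast_sub hk] at this
    exact_mod_cast this
  have hne : ((m : ℚ) + k + 1) ≠ 0 := by positivity
  simp only [cOdd, show (2 * m + 1 - 1) / 2 = m from by omega,
    show (2 * m + 1 + 1) / 2 = m + 1 from by omega, hd, hsymm,
    show m + 1 + k = m + k + 1 from by omega]
  push_cast
  set X := ((Nat.choose (m + k + 1) (2 * k + 1) : ℕ) : ℚ) with hX
  set Y := ((Nat.choose (m + k) (2 * k + 1) : ℕ) : ℚ) with hY
  field_simp
  linear_combination (-1 : ℚ) * hmulQ

lemma aEven_eq (m k : ℕ) (hk : k ≤ m) (hm : 1 ≤ m) :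
    aEven (2 * m + 1) k = (-1) ^ k * (dcoef (2 * m) (m - k) : ℚ) := by
  have hd : dcoef (2 * m) (m - k)
      = Nat.choose (m + k) (m - k) + Nat.choose (m + k - 1) (2 * k) := by
    rcases Nat.eq_or_lt_of_le hk with rfl | h
    · rw [Nat.sub_self, dcoef_zero, Nat.choose_zero_right,
        Nat.choose_eq_zero_of_lt (by omega)]
    · simp only [dcoef, if_pos (by omega : 2 * (m - k) ≤ 2 * m),
        if_neg (by omega : ¬ m - k = 0),
        show 2 * m - (m - k) = m + k from by omega,
        show 2 * m - (m - k) - 1 = m + k - 1 from by omega]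
      congr 1
      rw [← Nat.choose_symm (by omega : 2 * k ≤ m + k - 1)]
      congr 1
      omega
  have hsymm : Nat.choose (m + k) (m - k) = Nat.choose (m + k) (2 * k) := by
    rw [← Nat.choose_symm (by omega : 2 * k ≤ m + k)]
    congr 1
    omega
  have hmul := Nat.choose_mul_succ_eq (m + k - 1) (2 * k)
  rw [show m + k - 1 + 1 = m + k from by omega,
    show m + k - 2 * k = m - k from by omega] at hmul
  have hmulQ : (Nat.choose (m + k - 1) (2 * k) : ℚ) * (m + k)
      = (Nat.choose (m + k) (2 * k) : ℚ) * ((m : ℚ) - k) := by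
    have := congrArg (fun x : ℕ => (x : ℚ)) hmul
    push_cast at this
    rw [Nat.cast_sub hk] at this
    exact_mod_cast this
  have hne : ((m : ℚ) + k) ≠ 0 := by
    have h0 : ((m + k : ℕ) : ℚ) ≠ 0 := Nat.cast_ne_zero.mpr (by omega)
    push_cast at h0
    exact h0
  simp only [aEven, show (2 * m + 1 - 1) / 2 = m from by omega, hd, hsymm]
  push_cast
  set X := ((Nat.choose (m + k) (2 * k) : ℕ) : ℚ) with hX
  set Y := ((Nat.choose (m + k - 1) (2 * k) : ℕ) : ℚ) with hY
  field_simp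
  linear_combination (-1 : ℚ) * hmulQ

lemma main_aux {L : Type*} [Field L] [IsAlgClosed L] [CharZero L]
    (m : ℕ) (hm1 : 1 ≤ m) (d' R' : L) (hR' : R' ≠ 0) (hD0 : d' ^ 2 - R' ≠ 0) (u : L)
    (hu : (d' ^ 2 - R') ^ m *
        (∑ k ∈ Finset.range (m + 1),
          ((cOdd (2 * m + 1) k : L) / (d' ^ 2 - R') ^ k) * u ^ (2 * k + 1))
      - 2 * d' * (d' ^ 2 - R') ^ m = 0) :
    4 * (d' ^ 2 - R') ^ 2 *
        (1 / (2 * R') *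
            (∑ k ∈ Finset.range (m + 1),
              ((aEven (2 * m + 1) k : L) / (d' ^ 2 - R') ^ k) * u ^ (2 * k))
          + (-1) ^ (m + 1) * d' / (2 * R' * (d' ^ 2 - R')) * u) ^ 2 * R'
      = u ^ 2 - 4 * (d' ^ 2 - R') := by
  have h2 : (2 : L) ≠ 0 := two_ne_zero
  set D' := d' ^ 2 - R' with hD'def
  obtain ⟨w, hw⟩ := IsAlgClosed.exists_pow_nat_eq (u ^ 2 - 4 * D') (n := 2) (by norm_num)
  set t := (u + w) / 2 with ht
  set s := (u - w) / 2 with hs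
  have hsum : t + s = u := by rw [ht, hs]; ring
  have hts : t * s = D' := by
    rw [ht, hs]
    field_simp
    linear_combination -hw
  -- Step A : the hypothesis gives t^p + s^p = 2 d' D'^m
  have hS : D' ^ m * (∑ k ∈ Finset.range (m + 1),
        ((cOdd (2 * m + 1) k : L) / D' ^ k) * u ^ (2 * k + 1))
      = t ^ (2 * m + 1) + s ^ (2 * m + 1) := by
    rw [← dickson_sum_odd t s m, Finset.mul_sum]
    refine Finset.sum_congr rfl fun k hk => ?_
    simp only [Finset.mem_range] at hk
    have hck : ((cOdd (2 * m + 1) k : ℚ) : L)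
        = (-1) ^ (m - k) * ((dcoef (2 * m + 1) (m - k) : ℕ) : L) := by
      rw [cOdd_eq m k (by omega)]
      push_cast
      ring
    rw [hck, hts, hsum]
    have hpow : D' ^ m = D' ^ (m - k) * D' ^ k := by
      rw [← pow_add]; congr 1; omega
    rw [hpow, div_eq_mul_inv]
    have hcan : D' ^ k * (D' ^ k)⁻¹ = 1 := mul_inv_cancel₀ (pow_ne_zero k hD0)
    linear_combination ((-1 : L) ^ (m - k) * ((dcoef (2 * m + 1) (m - k) : ℕ) : L)
      * D' ^ (m - k) * u ^ (2 * k + 1)) * hcan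
  have hT : t ^ (2 * m + 1) + s ^ (2 * m + 1) = 2 * d' * D' ^ m :=
    hS.symm.trans (sub_eq_zero.mp hu)
  set W := D' ^ m with hW
  have hXY : t ^ (2 * m + 1) * s ^ (2 * m + 1) = D' * W ^ 2 := by
    rw [← mul_pow, hts, hW, ← pow_mul]
    rw [show 2 * m + 1 = m * 2 + 1 from by ring, pow_succ]
    ring
  set e := t ^ (2 * m + 1) - d' * W with he
  have hY : s ^ (2 * m + 1) = d' * W - e := by rw [he]; linear_combination hT
  have he2 : e ^ 2 = R' * W ^ 2 := by
    rw [he]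
    linear_combination (t ^ (2 * m + 1)) * hT - hXY - W ^ 2 * hD'def
  -- Step B : the A-sum
  have hSA : W * (∑ k ∈ Finset.range (m + 1),
        ((aEven (2 * m + 1) k : L) / D' ^ k) * u ^ (2 * k))
      = (-1) ^ m * (t ^ (2 * m) + s ^ (2 * m)) := by
    rw [← dickson_sum_even t s m hm1, Finset.mul_sum, Finset.mul_sum]
    refine Finset.sum_congr rfl fun k hk => ?_
    simp only [Finset.mem_range] at hk
    have hak : ((aEven (2 * m + 1) k : ℚ) : L)
        = (-1) ^ k * ((dcoef (2 * m) (m - k) : ℕ) : L) := by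
      rw [aEven_eq m k (by omega) hm1]
      push_cast
      ring
    rw [hak, hts, hsum]
    have hpow : W = D' ^ (m - k) * D' ^ k := by rw [hW, ← pow_add]; congr 1; omega
    rw [hpow, div_eq_mul_inv]
    have hcan : D' ^ k * (D' ^ k)⁻¹ = 1 := mul_inv_cancel₀ (pow_ne_zero k hD0)
    have hm_eq : (-1 : L) ^ m * (-1 : L) ^ (m - k) = (-1) ^ k := by
      rw [← pow_add, show m + (m - k) = 2 * (m - k) + k from by omega, pow_add, pow_mul]
      norm_num
    linear_combination ((-1 : L) ^ k * (((dcoef (2 * m) (m - k) : ℕ) : L)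
        * (D' ^ (m - k) * u ^ (2 * k)))) * hcan
      - (((dcoef (2 * m) (m - k) : ℕ) : L) * (D' ^ (m - k) * u ^ (2 * k))) * hm_eq
  -- bracket identity
  have hbr : D' * (t ^ (2 * m) + s ^ (2 * m)) = d' * W * u - e * (t - s) := by
    have h1 : t * t ^ (2 * m) = t ^ (2 * m + 1) := by rw [← pow_succ']
    have h2' : s * s ^ (2 * m) = s ^ (2 * m + 1) := by rw [← pow_succ']
    rw [← hts]
    linear_combination s * h1 + t * h2' - s * he + t * hY + d' * W * hsum
  -- the main A computation
  have step1 : 2 * R' * D' * W *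
      (1 / (2 * R') * (∑ k ∈ Finset.range (m + 1),
          ((aEven (2 * m + 1) k : L) / D' ^ k) * u ^ (2 * k))
        + (-1) ^ (m + 1) * d' / (2 * R' * D') * u)
      = D' * (W * (∑ k ∈ Finset.range (m + 1),
          ((aEven (2 * m + 1) k : L) / D' ^ k) * u ^ (2 * k)))
        + (-1) ^ (m + 1) * (d' * W * u) := by
    field_simp
  have hA : 2 * R' * D' * W *
      (1 / (2 * R') * (∑ k ∈ Finset.range (m + 1),
          ((aEven (2 * m + 1) k : L) / D' ^ k) * u ^ (2 * k))
        + (-1) ^ (m + 1) * d' / (2 * R' * D') * u)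
      = -((-1) ^ m * (e * (t - s))) := by
    rw [step1, hSA, pow_succ]
    linear_combination ((-1 : L) ^ m) * hbr
  have hsq : ((-1 : L) ^ m) ^ 2 = 1 := by
    rw [← pow_mul, mul_comm, pow_mul]
    norm_num
  have hA2 : (2 * R' * D' * W) ^ 2 *
      (1 / (2 * R') * (∑ k ∈ Finset.range (m + 1),
          ((aEven (2 * m + 1) k : L) / D' ^ k) * u ^ (2 * k))
        + (-1) ^ (m + 1) * d' / (2 * R' * D') * u) ^ 2
      = R' * W ^ 2 * (t - s) ^ 2 := by
    rw [← mul_pow, hA, neg_sq, mul_pow, hsq, one_mul, mul_pow, he2]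
  have hu2 : u ^ 2 - 4 * D' = (t - s) ^ 2 := by
    rw [← hsum, ← hts]
    ring
  have hc : (2 * R' * D' * W) ^ 2 ≠ 0 := by
    apply pow_ne_zero
    simp only [hW]
    exact mul_ne_zero (mul_ne_zero (mul_ne_zero h2 hR') hD0) (pow_ne_zero m hD0)
  refine mul_left_cancel₀ hc ?_
  rw [hu2]
  linear_combination (4 * D' ^ 2 * R') * hA2

theorem root_of_f_identity (K : Type*) [Field K] [CharZero K]
    (p : ℕ) (hp : Odd p) (hp3 : 3 ≤ p)
    (d R : K) (hd : d ≠ 0) (hR : R ≠ 0) (hD : d ^ 2 - R ≠ 0)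
    (u : AlgebraicClosure K)
    (hu : algebraMap K (AlgebraicClosure K) ((d ^ 2 - R) ^ ((p - 1) / 2)) *
        (∑ k ∈ Finset.range ((p - 1) / 2 + 1),
          ((cOdd p k : AlgebraicClosure K) /
              algebraMap K (AlgebraicClosure K) (d ^ 2 - R) ^ k) * u ^ (2 * k + 1))
      - 2 * algebraMap K (AlgebraicClosure K) d *
          algebraMap K (AlgebraicClosure K) ((d ^ 2 - R) ^ ((p - 1) / 2)) = 0) :
    4 * algebraMap K (AlgebraicClosure K) ((d ^ 2 - R) ^ 2) *
        (algebraMap K (AlgebraicClosure K) (1 / (2 * R)) *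
            (∑ k ∈ Finset.range ((p - 1) / 2 + 1),
              ((aEven p k : AlgebraicClosure K) /
                  algebraMap K (AlgebraicClosure K) (d ^ 2 - R) ^ k) * u ^ (2 * k))
          + algebraMap K (AlgebraicClosure K)
              ((-1 : K) ^ ((p + 1) / 2) * d / (2 * R * (d ^ 2 - R))) * u) ^ 2 *
        algebraMap K (AlgebraicClosure K) R =
      u ^ 2 - 4 * algebraMap K (AlgebraicClosure K) (d ^ 2 - R) := by
  obtain ⟨m, rfl⟩ := hp
  have hm1 : 1 ≤ m := by omega
  have hinj := (algebraMap K (AlgebraicClosure K)).injective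
  have hR' : algebraMap K (AlgebraicClosure K) R ≠ 0 := by
    intro h
    exact hR (hinj (by rw [h, map_zero]))
  have hD' : (algebraMap K (AlgebraicClosure K)) d ^ 2
      - (algebraMap K (AlgebraicClosure K)) R ≠ 0 := by
    intro h
    apply hD
    apply hinj
    rw [map_sub, map_pow, h, map_zero]
  simp only [show (2 * m + 1 - 1) / 2 = m from by omega,
    show (2 * m + 1 + 1) / 2 = m + 1 from by omega] at hu ⊢
  simp only [map_pow, map_div₀, map_mul, map_sub, map_neg, map_one, map_ofNat] at hu ⊢
  exact main_aux m hm1 (algebraMap K (AlgebraicClosure K) d)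
    (algebraMap K (AlgebraicClosure K) R) hR' hD' u hu
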